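/- Let H = (V, E) be a 3-uniform hypergraph and let γ : V → ℝ satisfy γ_a ∈ [−1, 1] for all a ∈ V and γ_a + γ_b + γ_c = −1 for every edge {a, b, c} ∈ E. Let 0 < ε < 1. Then there exists a partial LO coloring of H, using at most ⌈log₂(4/(3ε))⌉ colors, that assigns a color to every vertex a ∈ V with γ_a ∉ [−1/3 − ε, −1/3 + ε]. -/
import Mathlib

/-- `c` is a partial LO coloring of the hypergraph with edge set `E`, coloring
exactly the vertices of `S`: for every edge meeting `S`, the maximum color on
`e ∩ S` is attained by exactly one vertex of `e ∩ S`. -/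
def IsPartialLOColoring {V C : Type*} [DecidableEq V] [LinearOrder C]
    (E : Finset (Finset V)) (S : Finset V) (c : V → C) : Prop :=
  ∀ e ∈ E, (e ∩ S).Nonempty → ∃ a ∈ e ∩ S, ∀ b ∈ e ∩ S, b ≠ a → c b < c a

/-- dyadic scale `(4/3)·2^{-j}` -/
noncomputable def scl (j : ℕ) : ℝ := (4/3) / 2 ^ j

lemma scl_pos (j : ℕ) : 0 < scl j := by unfold scl; positivity

lemma scl_le {i j : ℕ} (h : i ≤ j) : scl j ≤ scl i := by
  unfold scl
  apply div_le_div_of_nonneg_left (by norm_num) (by positivity)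
  exact pow_le_pow_right₀ one_le_two h

lemma scl_lt {i j : ℕ} (h : i < j) : scl j < scl i := by
  unfold scl
  apply div_lt_div_of_pos_left (by norm_num) (by positivity)
  exact pow_lt_pow_right₀ one_lt_two h

lemma lt_of_scl_lt {i j : ℕ} (h : scl i < scl j) : j < i := by
  by_contra h'
  push_neg at h'
  exact absurd (scl_le h') (not_le.mpr h)

lemma scl_succ (j : ℕ) : scl (j + 1) = scl j / 2 := by
  unfold scl; rw [pow_succ]; ring

/-- band index of `v ∈ (0, 4/3]` : the `m` with `scl (m+1) < v ≤ scl m`. -/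
noncomputable def mcl (v : ℝ) : ℕ := (Int.log 2 (4 / (3 * v))).toNat

lemma mcl_spec {v : ℝ} (h0 : 0 < v) (h1 : v ≤ 4 / 3) :
    scl (mcl v + 1) < v ∧ v ≤ scl (mcl v) := by
  have h3v : (0:ℝ) < 3 * v := by linarith
  have hx : (1:ℝ) ≤ 4 / (3 * v) := by rw [le_div_iff₀ h3v]; linarith
  have hlog0 : 0 ≤ Int.log 2 (4 / (3 * v)) := by
    have h := Int.log_mono_right (b := 2) (r₁ := (1:ℝ)) one_pos hx
    simpa using h
  have h2 : ((2:ℝ)) ^ (Int.log 2 (4 / (3 * v))) ≤ 4 / (3 * v) :=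
    Int.zpow_log_le_self (by norm_num) (by positivity)
  have h3 : 4 / (3 * v) < (2:ℝ) ^ (Int.log 2 (4 / (3 * v)) + 1) :=
    Int.lt_zpow_succ_log_self (by norm_num) _
  have hcast : Int.log 2 (4 / (3 * v)) = ((mcl v : ℕ) : ℤ) := by
    rw [mcl]; exact (Int.toNat_of_nonneg hlog0).symm
  rw [hcast] at h2 h3
  have h2' : (2:ℝ) ^ (mcl v) ≤ 4 / (3 * v) := by
    rw [← zpow_natCast (2:ℝ) (mcl v)]; exact_mod_cast h2
  have h3' : 4 / (3 * v) < (2:ℝ) ^ (mcl v + 1) := by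
    rw [← zpow_natCast (2:ℝ) (mcl v + 1)]
    push_cast
    exact h3
  constructor
  · unfold scl
    rw [div_lt_iff₀ (by positivity)]
    have := (div_lt_iff₀ h3v).mp h3'
    nlinarith [pow_pos (by norm_num : (0:ℝ) < 2) (mcl v + 1)]
  · unfold scl
    rw [le_div_iff₀ (by positivity)]
    have := (le_div_iff₀ h3v).mp h2'
    nlinarith [pow_pos (by norm_num : (0:ℝ) < 2) (mcl v)]

lemma le_mcl {v : ℝ} {n : ℕ} (h0 : 0 < v) (h1 : v ≤ 4 / 3) (h : v ≤ scl n) :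
    n ≤ mcl v := by
  have h2 := (mcl_spec h0 h1).1
  have h3 : scl (mcl v + 1) < scl n := lt_of_lt_of_le h2 h
  have := lt_of_scl_lt h3
  omega

lemma mcl_le {v : ℝ} {n : ℕ} (h0 : 0 < v) (h1 : v ≤ 4 / 3) (h : scl (n + 1) < v) :
    mcl v ≤ n := by
  have h2 := (mcl_spec h0 h1).2
  have := lt_of_scl_lt (lt_of_lt_of_le h h2)
  omega

open Classical in
/-- the color class of `u`. -/
noncomputable def Jcl (u : ℝ) : ℕ :=
  if (0 < u ↔ mcl |u| % 2 = 0) then mcl |u| else mcl |u| - 1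

lemma Jcl_le (u : ℝ) : Jcl u ≤ mcl |u| := by
  unfold Jcl; split <;> omega

lemma Jcl_parity_pos {u : ℝ} (h : 0 < u) : Jcl u % 2 = 0 := by
  unfold Jcl
  split_ifs with hc
  · have := hc.mp h; omega
  · have : ¬ (mcl |u| % 2 = 0) := fun hm => hc ⟨fun _ => hm, fun _ => h⟩
    omega

lemma Jcl_parity_neg {u : ℝ} (hneg : u < 0) (hge : -(2/3) ≤ u) : Jcl u % 2 = 1 := by
  have h0 : 0 < |u| := abs_pos.mpr (ne_of_lt hneg)
  have h14 : |u| ≤ 4 / 3 := by rw [abs_of_neg hneg]; linarith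
  have hle : |u| ≤ scl 1 := by
    rw [abs_of_neg hneg]
    have : scl 1 = 2/3 := by unfold scl; norm_num
    rw [this]; linarith
  have hm1 : 1 ≤ mcl |u| := le_mcl h0 h14 hle
  unfold Jcl
  split_ifs with hc
  · have : ¬ (mcl |u| % 2 = 0) := fun h => absurd (hc.mpr h) (not_lt.mpr hneg.le)
    omega
  · have : mcl |u| % 2 = 0 := by
      by_contra hm
      exact hc ⟨fun h => absurd h (not_lt.mpr hneg.le), fun h => absurd h hm⟩
    omega

lemma Jcl_mem {u : ℝ} (h0 : u ≠ 0) (hl : -(2/3) ≤ u) (hu : u ≤ 4/3) :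
    scl (Jcl u + 2) < |u| ∧ |u| ≤ scl (Jcl u) := by
  have habs0 : 0 < |u| := abs_pos.mpr h0
  have habs1 : |u| ≤ 4 / 3 := abs_le.mpr ⟨by linarith, hu⟩
  obtain ⟨hs1, hs2⟩ := mcl_spec habs0 habs1
  unfold Jcl
  split_ifs with hc
  · exact ⟨lt_of_le_of_lt (scl_le (by omega)) hs1, hs2⟩
  · have hm1 : 1 ≤ mcl |u| := by
      rcases h0.lt_or_gt with hneg | hpos
      · have hle : |u| ≤ scl 1 := by
          rw [abs_of_neg hneg]
          have : scl 1 = 2/3 := by unfold scl; norm_num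
          rw [this]; linarith
        exact le_mcl habs0 habs1 hle
      · have : ¬ (mcl |u| % 2 = 0) := fun h => hc ⟨fun _ => h, fun _ => hpos⟩
        omega
    constructor
    · have heq : mcl |u| - 1 + 2 = mcl |u| + 1 := by omega
      rw [heq]; exact hs1
    · exact hs2.trans (scl_le (by omega))

lemma third {p q r : ℝ} (hp1 : -(2/3) ≤ p) (hp2 : p ≤ 4/3) (hq1 : -(2/3) ≤ q) (hq2 : q ≤ 4/3)
    (hr1 : -(2/3) ≤ r) (hr2 : r ≤ 4/3) (hs : p + q + r = 0) (hp0 : p ≠ 0) (hq0 : q ≠ 0)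
    (hJ : Jcl q = Jcl p) : r ≠ 0 ∧ Jcl r < Jcl p := by
  obtain ⟨hp3, hp4⟩ := Jcl_mem hp0 hp1 hp2
  obtain ⟨hq3, hq4⟩ := Jcl_mem hq0 hq1 hq2
  rw [hJ] at hq3 hq4
  have hscl2 : scl (Jcl p + 1) = 2 * scl (Jcl p + 2) := by
    rw [scl_succ (Jcl p + 1)]; ring
  have hsp2 := scl_pos (Jcl p + 2)
  rcases hp0.lt_or_gt with hpneg | hppos
  · have hjodd := Jcl_parity_neg hpneg hp1
    have hqneg : q < 0 := by
      rcases hq0.lt_or_gt with h | h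
      · exact h
      · have h2 := Jcl_parity_pos h
        rw [hJ] at h2; omega
    rw [abs_of_neg hpneg] at hp3 hp4
    rw [abs_of_neg hqneg] at hq3 hq4
    have hrpos : 0 < r := by linarith
    have hr0 : r ≠ 0 := ne_of_gt hrpos
    have hrabs : |r| = r := abs_of_pos hrpos
    have hm : mcl |r| ≤ Jcl p := by
      apply mcl_le (abs_pos.mpr hr0) (abs_le.mpr ⟨by linarith, hr2⟩)
      rw [hrabs, hscl2]; linarith
    have hJr : Jcl r ≤ Jcl p := (Jcl_le r).trans hm
    have hpar := Jcl_parity_pos hrpos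
    exact ⟨hr0, by omega⟩
  · have hjeven := Jcl_parity_pos hppos
    have hqpos : 0 < q := by
      rcases hq0.lt_or_gt with h | h
      · have h2 := Jcl_parity_neg h hq1
        rw [hJ] at h2; omega
      · exact h
    rw [abs_of_pos hppos] at hp3 hp4
    rw [abs_of_pos hqpos] at hq3 hq4
    have hrneg : r < 0 := by linarith
    have hr0 : r ≠ 0 := ne_of_lt hrneg
    have hrabs : |r| = -r := abs_of_neg hrneg
    have hm : mcl |r| ≤ Jcl p := by
      apply mcl_le (abs_pos.mpr hr0) (abs_le.mpr ⟨by linarith, by linarith⟩)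
      rw [hrabs, hscl2]; linarith
    have hJr : Jcl r ≤ Jcl p := (Jcl_le r).trans hm
    have hpar := Jcl_parity_neg hrneg hr1
    exact ⟨hr0, by omega⟩

theorem partial_LO_coloring_of_unbalanced_vertices
    {V : Type*} [Fintype V] [DecidableEq V]
    (E : Finset (Finset V)) (hE : ∀ e ∈ E, e.card = 3)
    (γ : V → ℝ) (hγ : ∀ a, γ a ∈ Set.Icc (-1 : ℝ) 1)
    (hsum : ∀ a b c : V, a ≠ b → a ≠ c → b ≠ c →
      ({a, b, c} : Finset V) ∈ E → γ a + γ b + γ c = -1)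
    (ε : ℝ) (hε0 : 0 < ε) (hε1 : ε < 1) :
    ∃ (k : ℕ) (S : Finset V) (c : V → Fin k),
      k ≤ ⌈Real.logb 2 (4 / (3 * ε))⌉₊ ∧
      (∀ a : V, γ a ∉ Set.Icc (-1/3 - ε) (-1/3 + ε) → a ∈ S) ∧
      IsPartialLOColoring E S c := by
  classical
  set k := ⌈Real.logb 2 (4 / (3 * ε))⌉₊ with hk
  have h3e : (0:ℝ) < 3 * ε := by linarith
  have hx1 : (1:ℝ) < 4 / (3 * ε) := by rw [lt_div_iff₀ h3e]; linarith
  have hk1 : 1 ≤ k := Nat.one_le_ceil_iff.mpr (Real.logb_pos one_lt_two hx1)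
  have hek : scl k ≤ ε := by
    have h1 : Real.logb 2 (4 / (3 * ε)) ≤ (k : ℝ) := Nat.le_ceil _
    have h2 : 4 / (3 * ε) ≤ (2:ℝ) ^ (k : ℝ) := by
      calc 4 / (3 * ε) = 2 ^ Real.logb 2 (4 / (3 * ε)) :=
            (Real.rpow_logb (by norm_num) (by norm_num) (by linarith)).symm
        _ ≤ 2 ^ (k : ℝ) := Real.rpow_le_rpow_of_exponent_le one_le_two h1
    rw [Real.rpow_natCast] at h2
    have h3 := (div_le_iff₀ h3e).mp h2
    unfold scl
    rw [div_le_iff₀ (by positivity)]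
    nlinarith [pow_pos (by norm_num : (0:ℝ) < 2) k]
  set u : V → ℝ := fun a => γ a + 1/3 with hu
  have hub : ∀ a : V, -(2/3) ≤ u a ∧ u a ≤ 4/3 := by
    intro a
    have h1 := (hγ a).1
    have h2 := (hγ a).2
    constructor <;> simp only [hu] <;> linarith
  set S : Finset V := Finset.univ.filter (fun a => u a ≠ 0 ∧ Jcl (u a) < k) with hS
  have hmemS : ∀ a, a ∈ S ↔ (u a ≠ 0 ∧ Jcl (u a) < k) := by
    intro a; simp [hS]
  refine ⟨k, S, fun a => ⟨k - 1 - Jcl (u a), by omega⟩, le_refl _, ?_, ?_⟩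
  · intro a ha
    rw [Set.mem_Icc, not_and_or, not_le, not_le] at ha
    have habs : ε < |u a| := by
      rcases ha with h | h
      · rw [lt_abs]; right; simp only [hu]; linarith
      · rw [lt_abs]; left; simp only [hu]; linarith
    have h0 : u a ≠ 0 := by
      intro h
      rw [h, abs_zero] at habs
      linarith
    rw [hmemS]
    refine ⟨h0, ?_⟩
    have hmm : mcl |u a| < k := by
      by_contra hmm
      push_neg at hmm
      have h2 := (mcl_spec (abs_pos.mpr h0)
        (abs_le.mpr ⟨by linarith [(hub a).1], (hub a).2⟩)).2
      have h3 : |u a| ≤ scl k := h2.trans (scl_le hmm)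
      linarith
    exact lt_of_le_of_lt (Jcl_le _) hmm
  · intro e he hne
    obtain ⟨x, hx, hmin⟩ := Finset.exists_min_image (e ∩ S) (fun a => Jcl (u a)) hne
    refine ⟨x, hx, ?_⟩
    intro y hy hyx
    have hxS := (hmemS x).mp (Finset.mem_inter.mp hx).2
    have hyS := (hmemS y).mp (Finset.mem_inter.mp hy).2
    have hle := hmin y hy
    rcases eq_or_lt_of_le hle with heq | hlt
    · exfalso
      obtain ⟨a, b, cc, hab, hac, hbc, hefo⟩ := Finset.card_eq_three.mp (hE e he)
      have husum : u a + u b + u cc = 0 := by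
        have := hsum a b cc hab hac hbc (hefo ▸ he)
        simp only [hu]
        linarith
      have hxe := (Finset.mem_inter.mp hx).1
      have hye := (Finset.mem_inter.mp hy).1
      rw [hefo] at hxe hye
      simp only [Finset.mem_insert, Finset.mem_singleton] at hxe hye
      obtain ⟨z, hze, hsum3⟩ : ∃ z, z ∈ e ∧ u x + u y + u z = 0 := by
        rcases hxe with rfl | rfl | rfl <;> rcases hye with rfl | rfl | rfl <;>
          first
            | exact absurd rfl hyx
            | exact ⟨cc, by rw [hefo]; simp, by linarith⟩
            | exact ⟨b, by rw [hefo]; simp, by linarith⟩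
            | exact ⟨a, by rw [hefo]; simp, by linarith⟩
      have h3 := third (hub x).1 (hub x).2 (hub y).1 (hub y).2 (hub z).1 (hub z).2
        hsum3 hxS.1 hyS.1 heq.symm
      obtain ⟨hz0, hzlt⟩ := h3
      have hzS : z ∈ e ∩ S :=
        Finset.mem_inter.mpr ⟨hze, (hmemS z).mpr ⟨hz0, hzlt.trans hxS.2⟩⟩
      have := hmin z hzS
      omega
    · show (⟨k - 1 - Jcl (u y), _⟩ : Fin k) < ⟨k - 1 - Jcl (u x), _⟩
      rw [Fin.mk_lt_mk]
      have h1 := hyS.2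
      omega
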